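/- arXiv:2007.09958 — 3 statements merged into one kernel-verified Lean document; each statement's English description precedes it below -/
import Mathlib

section
/- Let G be a group acting primitively on a finite set Ω with |Ω| = d, and let A ⊆ Ω be a subset with 0 < |A| ≤ d−2 such that the pointwise stabilizer of A in G acts transitively on Ω \ A. Then the action of G on Ω is 2-transitive. -/
open Pointwise

def IsJordanSet (G : Type*) {Ω : Type*} [Group G] [MulAction G Ω] (S : Set Ω) : Prop :=
  ∀ x ∈ S, ∀ y ∈ S, ∃ g : G, (∀ a ∈ Sᶜ, g • a = a) ∧ g • x = y

section Aux
variable {G Ω : Type*} [Group G] [MulAction G Ω]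

lemma isJordanSet_smul {S : Set Ω} (hS : IsJordanSet G S) (g : G) :
    IsJordanSet G (g • S) := by
  rintro x hx y hy
  obtain ⟨x', hx', rfl⟩ := hx
  obtain ⟨y', hy', rfl⟩ := hy
  obtain ⟨h, hfix, hxy⟩ := hS x' hx' y' hy'
  refine ⟨g * h * g⁻¹, ?_, ?_⟩
  · intro a ha
    have hmem : g⁻¹ • a ∈ Sᶜ := by
      intro hmem
      exact ha ⟨g⁻¹ • a, hmem, by simp⟩
    have h1 := hfix _ hmem
    calc (g * h * g⁻¹) • a = g • h • g⁻¹ • a := by simp [mul_smul]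
    _ = g • g⁻¹ • a := by rw [h1]
    _ = a := by simp
  · calc (g * h * g⁻¹) • g • x' = g • h • g⁻¹ • g • x' := by simp [mul_smul]
    _ = g • h • x' := by simp
    _ = g • y' := by rw [hxy]

lemma isJordanSet_union {S T : Set Ω} (hS : IsJordanSet G S) (hT : IsJordanSet G T)
    (hST : (S ∩ T).Nonempty) : IsJordanSet G (S ∪ T) := by
  obtain ⟨w, hwS, hwT⟩ := hST
  have key : ∀ z ∈ S ∪ T, ∃ g : G, (∀ a ∈ (S ∪ T)ᶜ, g • a = a) ∧ g • w = z := by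
    rintro z (hz | hz)
    · obtain ⟨g, hfix, hgz⟩ := hS w hwS z hz
      exact ⟨g, fun a ha => hfix a (fun h => ha (Or.inl h)), hgz⟩
    · obtain ⟨g, hfix, hgz⟩ := hT w hwT z hz
      exact ⟨g, fun a ha => hfix a (fun h => ha (Or.inr h)), hgz⟩
  intro x hx y hy
  obtain ⟨gx, hgxfix, hgx⟩ := key x hx
  obtain ⟨gy, hgyfix, hgy⟩ := key y hy
  refine ⟨gy * gx⁻¹, fun a ha => ?_, ?_⟩
  · have h1 : gx⁻¹ • a = a := by rw [inv_smul_eq_iff, hgxfix a ha]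
    rw [mul_smul, h1, hgyfix a ha]
  · have h1 : gx⁻¹ • x = w := by rw [inv_smul_eq_iff, hgx]
    rw [mul_smul, h1, hgy]

end Aux

/-- Let `G` act primitively on a finite set `Ω` with `|Ω| = d` (transitively, and every block
is a singleton or all of `Ω`), and let `A ⊆ Ω` with `0 < |A| ≤ d - 2` be such that the
pointwise stabilizer of `A` acts transitively on `Ω \ A`. Then the action of `G` on `Ω` is
`2`-transitive. -/
theorem two_transitive_of_primitive_of_stabilizer_transitive {G Ω : Type*} [Group G]
    [MulAction G Ω] [Fintype Ω]
    (htrans : ∀ x y : Ω, ∃ g : G, g • x = y)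
    (hprim : ∀ B : Set Ω, B.Nonempty → (∀ g : G, g • B = B ∨ Disjoint (g • B) B) →
      (∃ x, B = {x}) ∨ B = Set.univ)
    (A : Set Ω) (hA0 : 0 < A.ncard) (hA2 : A.ncard ≤ Fintype.card Ω - 2)
    (hstab : ∀ m ∈ Aᶜ, ∀ t ∈ Aᶜ, ∃ g : G, (∀ a ∈ A, g • a = a) ∧ g • m = t) :
    ∀ m t : Fin 2 ↪ Ω, ∃ g : G, ∀ j, g • m j = t j := by
  classical
  set d := Fintype.card Ω with hd
  have hcompl : ∀ S : Set Ω, S.ncard + Sᶜ.ncard = d := fun S => by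
    rw [Set.ncard_add_ncard_compl, Nat.card_eq_fintype_card]
  have hcardle : ∀ S : Set Ω, S.ncard ≤ d := fun S => by
    have := hcompl S; omega
  have hAc2 : 2 ≤ (Aᶜ).ncard := by have := hcompl A; omega
  have hsmulcard : ∀ (g : G) (S : Set Ω), (g • S).ncard = S.ncard := fun g S => by
    rw [← Set.image_smul]; exact Set.ncard_image_of_injective S (MulAction.injective g)
  have hAcJordan : IsJordanSet G Aᶜ := by
    intro x hx y hy
    obtain ⟨g, h1, h2⟩ := hstab x hx y hy
    exact ⟨g, fun a ha => h1 a (by simpa using ha), h2⟩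
  -- the family of proper Jordan sets containing Aᶜ
  set F : Set (Set Ω) := {S | IsJordanSet G S ∧ Aᶜ ⊆ S ∧ S ≠ Set.univ} with hF
  have hAcF : Aᶜ ∈ F := by
    refine ⟨hAcJordan, le_refl _, fun h => ?_⟩
    have hAe : A = ∅ := by simpa using congrArg (·ᶜ) h
    rw [hAe] at hA0; simp at hA0
  obtain ⟨S, hSmem, hmax'⟩ := Set.Finite.exists_maximalFor id F (Set.toFinite F) ⟨Aᶜ, hAcF⟩
  obtain ⟨hSJ, hAcS, hSne⟩ := hSmem
  have hmax : ∀ T ∈ F, S ⊆ T → S = T := fun T hT hST => le_antisymm hST (hmax' hT hST)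
  have hS2 : 2 ≤ S.ncard := le_trans hAc2 (Set.ncard_le_ncard hAcS (Set.toFinite _))
  have hSnonempty : S.Nonempty := by
    rw [← Set.ncard_pos]; omega
  -- a maximal proper Jordan set with a translate overlapping it nontrivially
  have stepA : ∃ h : G, ((h • S) ∩ S).Nonempty ∧ h • S ≠ S := by
    by_contra hcon
    push_neg at hcon
    have hblock : ∀ g : G, g • S = S ∨ Disjoint (g • S) S := by
      intro g
      by_cases hne : ((g • S) ∩ S).Nonempty
      · exact Or.inl (hcon g hne)
      · rw [Set.not_nonempty_iff_eq_empty] at hne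
        exact Or.inr (Set.disjoint_iff_inter_eq_empty.mpr hne)
    rcases hprim S hSnonempty hblock with ⟨x, hx⟩ | hu
    · rw [hx, Set.ncard_singleton] at hS2; omega
    · exact hSne hu
  obtain ⟨h, hhne, hhneq⟩ := stepA
  have hunion_ne : ∀ g : G, ((g • S) ∩ S).Nonempty → g • S ≠ S → g • S ∪ S = Set.univ := by
    intro g hne hneq
    have hJ : IsJordanSet G (g • S ∪ S) := isJordanSet_union (isJordanSet_smul hSJ g) hSJ hne
    have hne3 : g • S ∪ S ≠ S := by
      intro heq
      have hsub : g • S ⊆ S := by intro x hx; rw [← heq]; exact Or.inl hx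
      exact hneq (Set.eq_of_subset_of_ncard_le hsub (le_of_eq (hsmulcard g S).symm))
    by_contra hne4
    exact hne3 (hmax _ ⟨hJ, le_trans hAcS Set.subset_union_right, hne4⟩
      Set.subset_union_right).symm
  have hbig : d + 1 ≤ 2 * S.ncard := by
    have h1 := Set.ncard_union_add_ncard_inter (h • S) S
    rw [hunion_ne h hhne hhneq, Set.ncard_univ, Nat.card_eq_fintype_card, hsmulcard] at h1
    have h2 : 0 < ((h • S) ∩ S).ncard := (Set.ncard_pos (Set.toFinite _)).mpr hhne
    omega
  have stepB : ∀ g : G, g • S = S ∨ g • S ∪ S = Set.univ := by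
    intro g
    have hne' : ((g • S) ∩ S).Nonempty := by
      by_contra hcon
      rw [Set.not_nonempty_iff_eq_empty] at hcon
      have h1 := Set.ncard_union_add_ncard_inter (g • S) S
      rw [hcon, Set.ncard_empty, hsmulcard] at h1
      have := hcardle ((g • S) ∪ S)
      omega
    by_cases hgS : g • S = S
    · exact Or.inl hgS
    · exact Or.inr (hunion_ne g hne' hgS)
  have hblock : ∀ g : G, g • Sᶜ = Sᶜ ∨ Disjoint (g • Sᶜ) Sᶜ := by
    intro g
    rcases stepB g with h1 | h1
    · left; rw [Set.smul_set_compl, h1]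
    · right
      rw [Set.smul_set_compl, Set.disjoint_iff_inter_eq_empty, ← Set.compl_union, h1,
        Set.compl_univ]
  have hΔne : Sᶜ.Nonempty := Set.nonempty_compl.mpr hSne
  rcases hprim Sᶜ hΔne hblock with ⟨α, hα⟩ | habs
  · -- Sᶜ = {α}; the stabilizer of α is transitive on the rest
    have hSeq : S = {α}ᶜ := by rw [← hα, compl_compl]
    have hα_trans : ∀ x y : Ω, x ≠ α → y ≠ α → ∃ g : G, g • α = α ∧ g • x = y := by
      intro x y hx hy
      have hxS : x ∈ S := by rw [hSeq]; simpa using hx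
      have hyS : y ∈ S := by rw [hSeq]; simpa using hy
      obtain ⟨g, hfix, hxy⟩ := hSJ x hxS y hyS
      exact ⟨g, hfix α (by rw [hα]; exact rfl), hxy⟩
    intro m t
    have hm : m 0 ≠ m 1 := fun hh => absurd (m.injective hh) (by decide)
    have ht : t 0 ≠ t 1 := fun hh => absurd (t.injective hh) (by decide)
    obtain ⟨g1, hg1⟩ := htrans (m 0) α
    obtain ⟨g2, hg2⟩ := htrans (t 0) α
    have h1 : g1 • m 1 ≠ α := by
      rw [← hg1]; intro hh; exact hm (MulAction.injective g1 hh).symm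
    have h2 : g2 • t 1 ≠ α := by
      rw [← hg2]; intro hh; exact ht (MulAction.injective g2 hh).symm
    obtain ⟨k, hkα, hk⟩ := hα_trans (g1 • m 1) (g2 • t 1) h1 h2
    refine ⟨g2⁻¹ * k * g1, fun j => ?_⟩
    fin_cases j
    · show (g2⁻¹ * k * g1) • m 0 = t 0
      rw [mul_smul, mul_smul, hg1, hkα, inv_smul_eq_iff, hg2]
    · show (g2⁻¹ * k * g1) • m 1 = t 1
      rw [mul_smul, mul_smul, hk, inv_smul_smul]
  · -- Sᶜ = univ is impossible
    have hSe : S = ∅ := by simpa using congrArg (·ᶜ) habs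
    rw [hSe, Set.ncard_empty] at hS2; omega
end

section
/- Let n ≥ 1 and d ≥ 1 be integers, let F ∈ ℂ[x_1,…,x_{n+2}] be an irreducible homogeneous polynomial of degree d, and let P ∈ ℂ^{n+2} be a point with F(P) ≠ 0. Then the polynomial f_{F,P}(t) = F(Q_1 + t·P_1, …, Q_{n+2} + t·P_{n+2}), which has degree d in t with leading coefficient F(P), is irreducible in K[t]. (This expresses that the monodromy group of the projection of the irreducible hypersurface {F = 0} from the outer point [P] is a transitive subgroup of S_d.) -/
set_option synthInstance.maxHeartbeats 1000000
set_option maxHeartbeats 1000000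

/-- The field `K = ℂ(Q₁, …, Q_m)` of rational functions in `m` variables over `ℂ`. -/
noncomputable abbrev RatFuncField (m : ℕ) : Type :=
  FractionRing (MvPolynomial (Fin m) ℂ)

/-- `f_{F,P}(t) = F(Q₁ + t·P₁, …, Q_m + t·P_m) ∈ K[t]`, obtained by substituting
`x_i ↦ Q_i + t·P_i` in `F`. -/
noncomputable def fFP {m : ℕ} (F : MvPolynomial (Fin m) ℂ) (P : Fin m → ℂ) :
    Polynomial (RatFuncField m) :=
  MvPolynomial.eval₂
    ((Polynomial.C : RatFuncField m →+* Polynomial (RatFuncField m)).comp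
      ((algebraMap (MvPolynomial (Fin m) ℂ) (RatFuncField m)).comp
        (MvPolynomial.C : ℂ →+* MvPolynomial (Fin m) ℂ)))
    (fun i =>
      Polynomial.C (algebraMap (MvPolynomial (Fin m) ℂ) (RatFuncField m) (MvPolynomial.X i)) +
        Polynomial.C (algebraMap (MvPolynomial (Fin m) ℂ) (RatFuncField m)
          (MvPolynomial.C (P i))) * Polynomial.X)
    F

namespace FFPAux

open Polynomial

variable {m : ℕ}

/-- `x_i ↦ Q_i + t·P_i`, over the base ring `R = ℂ[Q]`. -/
noncomputable def g (P : Fin m → ℂ) (i : Fin m) :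
    Polynomial (MvPolynomial (Fin m) ℂ) :=
  Polynomial.C (MvPolynomial.X i) + Polynomial.C (MvPolynomial.C (P i)) * Polynomial.X

/-- `F(Q + t·P)` as a polynomial over `R = ℂ[Q]`. -/
noncomputable def f0 (F : MvPolynomial (Fin m) ℂ) (P : Fin m → ℂ) :
    Polynomial (MvPolynomial (Fin m) ℂ) :=
  MvPolynomial.eval₂
    ((Polynomial.C : _ →+* Polynomial (MvPolynomial (Fin m) ℂ)).comp
      (MvPolynomial.C : ℂ →+* MvPolynomial (Fin m) ℂ))
    (g P) F

theorem natDegree_g_le (P : Fin m → ℂ) (i : Fin m) : (g P i).natDegree ≤ 1 := by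
  apply le_trans (Polynomial.natDegree_add_le _ _)
  simp [Polynomial.natDegree_C_mul_le, max_le_iff]
  exact le_trans (Polynomial.natDegree_C_mul_le _ _) (by simp)

theorem coeff_g_one (P : Fin m → ℂ) (i : Fin m) :
    (g P i).coeff 1 = MvPolynomial.C (P i) := by
  simp [g, Polynomial.coeff_C]

/-- coefficient of a finset product at the sum of degree bounds. -/
theorem coeff_prod_of_natDegree_le' {S : Type*} [CommSemiring S] {ι : Type*} (s : Finset ι)
    (f : ι → Polynomial S) (n : ι → ℕ) (h : ∀ i ∈ s, (f i).natDegree ≤ n i) :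
    (∏ i ∈ s, f i).coeff (∑ i ∈ s, n i) = ∏ i ∈ s, (f i).coeff (n i) := by
  classical
  induction s using Finset.cons_induction with
  | empty => simp
  | cons a s ha ih =>
    rw [Finset.prod_cons, Finset.sum_cons,
      Polynomial.coeff_mul_add_eq_of_natDegree_le (h a (Finset.mem_cons_self a s))
        ((Polynomial.natDegree_prod_le s f).trans
          (Finset.sum_le_sum fun i hi => h i (Finset.mem_cons_of_mem hi))),
      ih (fun i hi => h i (Finset.mem_cons_of_mem hi)), Finset.prod_cons]

theorem natDegree_f0_le {d : ℕ} (F : MvPolynomial (Fin m) ℂ) (P : Fin m → ℂ)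
    (hhom : F.IsHomogeneous d) : (f0 F P).natDegree ≤ d := by
  rw [f0, MvPolynomial.eval₂_eq]
  apply Polynomial.natDegree_sum_le_of_forall_le
  intro s hs
  apply le_trans (Polynomial.natDegree_mul_le)
  have hdeg : ∑ i ∈ s.support, s i = d := by
    have := hhom (MvPolynomial.mem_support_iff.mp hs)
    simpa [Finsupp.weight_apply, Finsupp.sum] using this
  simp only [RingHom.coe_comp, Function.comp_apply, Polynomial.natDegree_C, zero_add]
  calc (∏ i ∈ s.support, g P i ^ s i).natDegree
      ≤ ∑ i ∈ s.support, (g P i ^ s i).natDegree := Polynomial.natDegree_prod_le _ _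
    _ ≤ ∑ i ∈ s.support, s i * 1 := by
        apply Finset.sum_le_sum
        intro i _
        exact Polynomial.natDegree_pow_le_of_le _ (natDegree_g_le P i)
    _ = d := by simpa using hdeg

theorem coeff_f0_d {d : ℕ} (F : MvPolynomial (Fin m) ℂ) (P : Fin m → ℂ)
    (hhom : F.IsHomogeneous d) :
    (f0 F P).coeff d = MvPolynomial.C (MvPolynomial.eval P F) := by
  rw [f0, MvPolynomial.eval₂_eq, Polynomial.finset_sum_coeff]
  rw [MvPolynomial.eval_eq, map_sum]
  apply Finset.sum_congr rfl
  intro s hs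
  have hdeg : ∑ i ∈ s.support, s i = d := by
    have := hhom (MvPolynomial.mem_support_iff.mp hs)
    simpa [Finsupp.weight_apply, Finsupp.sum] using this
  rw [RingHom.coe_comp, Function.comp_apply, Polynomial.coeff_C_mul]
  rw [← hdeg]
  have : (∏ i ∈ s.support, g P i ^ s i).coeff (∑ i ∈ s.support, s i)
      = ∏ i ∈ s.support, (g P i ^ s i).coeff (s i) := by
    apply coeff_prod_of_natDegree_le'
    intro i _
    simpa using Polynomial.natDegree_pow_le_of_le (s i) (natDegree_g_le P i)
  rw [this]
  have hc : ∀ i ∈ s.support, (g P i ^ s i).coeff (s i) = MvPolynomial.C (P i) ^ s i := by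
    intro i _
    have := Polynomial.coeff_pow_of_natDegree_le (p := g P i) (n := 1) (m := s i)
      (natDegree_g_le P i)
    rw [mul_one] at this
    rw [this, coeff_g_one]
  rw [Finset.prod_congr rfl hc, map_mul, map_prod]
  simp


noncomputable def phi (P : Fin m → ℂ) :
    MvPolynomial (Fin m) ℂ →+* Polynomial (MvPolynomial (Fin m) ℂ) :=
  MvPolynomial.eval₂Hom
    ((Polynomial.C : _ →+* Polynomial (MvPolynomial (Fin m) ℂ)).comp
      (MvPolynomial.C : ℂ →+* MvPolynomial (Fin m) ℂ)) (g P)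

noncomputable def Phi (P : Fin m → ℂ) :
    Polynomial (MvPolynomial (Fin m) ℂ) →+* Polynomial (MvPolynomial (Fin m) ℂ) :=
  Polynomial.eval₂RingHom (phi P) Polynomial.X

theorem Phi_comp (P : Fin m → ℂ) : (Phi (-P)).comp (Phi P) = RingHom.id _ := by
  apply Polynomial.ringHom_ext'
  · apply MvPolynomial.ringHom_ext
    · intro a
      simp [Phi, phi, g]
    · intro i
      simp [Phi, phi, g]
      ring
  · simp [Phi, phi]

noncomputable def eP (P : Fin m → ℂ) :
    Polynomial (MvPolynomial (Fin m) ℂ) ≃+* Polynomial (MvPolynomial (Fin m) ℂ) :=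
  RingEquiv.ofRingHom (Phi P) (Phi (-P))
    (by have := Phi_comp (-P); rwa [neg_neg] at this) (Phi_comp P)

theorem f0_eq (F : MvPolynomial (Fin m) ℂ) (P : Fin m → ℂ) :
    f0 F P = eP P (Polynomial.C F) := by
  simp only [eP, RingEquiv.ofRingHom, Phi]
  show f0 F P = Polynomial.eval₂ (phi P) Polynomial.X (Polynomial.C F)
  rw [Polynomial.eval₂_C]
  rfl

theorem irreducible_f0 (F : MvPolynomial (Fin m) ℂ) (P : Fin m → ℂ)
    (hF : Irreducible F) : Irreducible (f0 F P) := by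
  rw [f0_eq]
  rw [MulEquiv.irreducible_iff (eP P)]
  have hp : Prime F := UniqueFactorizationMonoid.irreducible_iff_prime.mp hF
  exact (Polynomial.prime_C_iff.mpr hp).irreducible

theorem natDegree_f0 {d : ℕ} (F : MvPolynomial (Fin m) ℂ) (P : Fin m → ℂ)
    (hhom : F.IsHomogeneous d) (hP : MvPolynomial.eval P F ≠ 0) :
    (f0 F P).natDegree = d := by
  refine le_antisymm (natDegree_f0_le F P hhom) ?_
  apply Polynomial.le_natDegree_of_ne_zero
  rw [coeff_f0_d F P hhom]
  simpa using hP

theorem isPrimitive_f0 {d : ℕ} (F : MvPolynomial (Fin m) ℂ) (P : Fin m → ℂ)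
    (hhom : F.IsHomogeneous d) (hP : MvPolynomial.eval P F ≠ 0) :
    (f0 F P).IsPrimitive := by
  intro r hr
  have hd : r ∣ (f0 F P).coeff d := (Polynomial.C_dvd_iff_dvd_coeff r _).mp hr d
  rw [coeff_f0_d F P hhom] at hd
  exact isUnit_of_dvd_unit hd ((isUnit_iff_ne_zero.mpr hP).map MvPolynomial.C)

theorem fFP_eq_map (F : MvPolynomial (Fin m) ℂ) (P : Fin m → ℂ) :
    fFP F P = (f0 F P).map (algebraMap (MvPolynomial (Fin m) ℂ) (RatFuncField m)) := by
  rw [fFP, f0, ← Polynomial.coe_mapRingHom]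
  have h := MvPolynomial.eval₂_comp_left
    (Polynomial.mapRingHom (algebraMap (MvPolynomial (Fin m) ℂ) (RatFuncField m)))
    ((Polynomial.C : _ →+* Polynomial (MvPolynomial (Fin m) ℂ)).comp
      (MvPolynomial.C : ℂ →+* MvPolynomial (Fin m) ℂ)) (g P) F
  rw [h]
  congr 1
  · ext a
    simp
  · funext i
    simp [g]

end FFPAux

/-- If `F` is an irreducible homogeneous polynomial of degree `d` in `n+2` variables and
`P ∈ ℂ^{n+2}` satisfies `F(P) ≠ 0`, then `f_{F,P}(t) = F(Q + t·P)` has degree `d` in `t`,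
leading coefficient `F(P)`, and is irreducible in `K[t]`. -/
theorem fFP_irreducible_of_irreducible (n d : ℕ) (hn : 1 ≤ n) (hd : 1 ≤ d)
    (F : MvPolynomial (Fin (n + 2)) ℂ) (hF : Irreducible F) (hhom : F.IsHomogeneous d)
    (P : Fin (n + 2) → ℂ) (hP : MvPolynomial.eval P F ≠ 0) :
    (fFP F P).natDegree = d ∧
    (fFP F P).leadingCoeff =
      algebraMap (MvPolynomial (Fin (n + 2)) ℂ) (RatFuncField (n + 2))
        (MvPolynomial.C (MvPolynomial.eval P F)) ∧
    Irreducible (fFP F P) := by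
  classical
  letI : NormalizationMonoid (MvPolynomial (Fin (n + 2)) ℂ) :=
    UniqueFactorizationMonoid.normalizationMonoid.toNormalizationMonoid
  letI : NormalizedGCDMonoid (MvPolynomial (Fin (n + 2)) ℂ) :=
    UniqueFactorizationMonoid.toNormalizedGCDMonoid _
  have hinj : Function.Injective
      (algebraMap (MvPolynomial (Fin (n + 2)) ℂ) (RatFuncField (n + 2))) :=
    IsFractionRing.injective _ _
  have hmap := FFPAux.fFP_eq_map F P
  have hdeg := FFPAux.natDegree_f0 F P hhom hP
  constructor
  · rw [hmap, Polynomial.natDegree_map_eq_of_injective hinj, hdeg]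
  constructor
  · rw [hmap, Polynomial.leadingCoeff_map_of_injective hinj, Polynomial.leadingCoeff, hdeg,
      FFPAux.coeff_f0_d F P hhom]
  · rw [hmap]
    exact ((FFPAux.isPrimitive_f0 F P hhom hP).irreducible_iff_irreducible_map_fraction_map).mp
      (FFPAux.irreducible_f0 F P hF)
end

section
/- Let n ≥ 1 and d ≥ 1 be integers, let F ∈ ℂ[x_1,…,x_{n+2}] be a squarefree homogeneous polynomial of degree d, and let P ∈ ℂ^{n+2} be a point with F(P) ≠ 0. Then the polynomial f_{F,P}(t) = F(Q_1 + t·P_1, …, Q_{n+2} + t·P_{n+2}) ∈ K[t] is squarefree, hence separable over K. (This expresses that the projection of the reduced hypersurface {F = 0} from the outer point [P] is generically étale of degree d, so that its monodromy group is well defined.) -/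
set_option synthInstance.maxHeartbeats 1000000
set_option maxHeartbeats 1000000

/-- Squarefreeness transfers along a ring hom with two-sided inverse. -/
theorem my_squarefree_map {R S : Type*} [CommRing R] [CommRing S]
    (f : R →+* S) (g : S →+* R) (hgf : ∀ x, g (f x) = x) (hfg : ∀ x, f (g x) = x)
    {a : R} (ha : Squarefree a) : Squarefree (f a) := by
  intro x hx
  have h2 : g x * g x ∣ a := by
    have := map_dvd g hx
    rwa [map_mul, hgf] at this
  have h3 := (ha _ h2).map f
  rwa [hfg] at h3

/-- If `a` is squarefree in a domain `R`, then `C a` is squarefree in `R[X]`. -/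
theorem my_squarefree_C {R : Type*} [CommRing R] [IsDomain R]
    {a : R} (ha : Squarefree a) : Squarefree (Polynomial.C a) := by
  have ha0 : a ≠ 0 := ha.ne_zero
  intro x hx
  obtain ⟨y, hy⟩ := hx
  have hx0 : x ≠ 0 := by
    rintro rfl
    rw [zero_mul, zero_mul] at hy
    exact ha0 (Polynomial.C_eq_zero.mp hy)
  have hy0 : y ≠ 0 := by
    rintro rfl
    rw [mul_zero] at hy
    exact ha0 (Polynomial.C_eq_zero.mp hy)
  have hdeg := congrArg Polynomial.natDegree hy
  rw [Polynomial.natDegree_C, Polynomial.natDegree_mul (mul_ne_zero hx0 hx0) hy0,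
    Polynomial.natDegree_mul hx0 hx0] at hdeg
  have hdx : x.natDegree = 0 := by omega
  have hdy : y.natDegree = 0 := by omega
  rw [Polynomial.eq_C_of_natDegree_eq_zero hdx] at hy ⊢
  rw [Polynomial.eq_C_of_natDegree_eq_zero hdy, ← map_mul, ← map_mul] at hy
  have : a = x.coeff 0 * x.coeff 0 * y.coeff 0 := Polynomial.C_injective hy
  exact Polynomial.isUnit_C.mpr (ha _ ⟨_, this⟩)

open scoped nonZeroDivisors in
/-- A squarefree polynomial over a GCD domain stays squarefree over the fraction field. -/
theorem my_squarefree_map_fraction {R : Type*} [CommRing R] [IsDomain R] [NormalizedGCDMonoid R]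
    (K : Type*) [Field K] [Algebra R K] [IsFractionRing R K]
    {g : Polynomial R} (hg : Squarefree g) :
    Squarefree (g.map (algebraMap R K)) := by
  have hg0 : g ≠ 0 := hg.ne_zero
  have hinj : Function.Injective (algebraMap R K) := IsFractionRing.injective R K
  have hmg0 : g.map (algebraMap R K) ≠ 0 := (Polynomial.map_ne_zero_iff hinj).mpr hg0
  intro w hw
  have hw0 : w ≠ 0 := by
    rintro rfl
    exact hmg0 (eq_zero_of_zero_dvd (by simpa using hw))
  obtain ⟨s, hs⟩ := IsLocalization.integerNormalization_map_to_map R⁰ w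
  set W := IsLocalization.integerNormalization R⁰ w with hWdef
  have hW0 : W ≠ 0 := fun h => hw0 (IsFractionRing.integerNormalization_eq_zero_iff.mp h)
  set p := W.primPart with hpdef
  have hp_prim : p.IsPrimitive := W.isPrimitive_primPart
  have hs' : W.map (algebraMap R K) = Polynomial.C (algebraMap R K (s : R)) * w := by
    rw [hs, Algebra.smul_def, IsScalarTower.algebraMap_apply R K (Polynomial K),
      Polynomial.algebraMap_eq]
  have hsu : IsUnit (Polynomial.C (algebraMap R K (s : R))) :=
    Polynomial.isUnit_C.mpr (isUnit_iff_ne_zero.mpr (fun h => nonZeroDivisors.coe_ne_zero s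
      (hinj (by rwa [map_zero]))))
  have hcu : IsUnit (Polynomial.C (algebraMap R K W.content)) :=
    Polynomial.isUnit_C.mpr (isUnit_iff_ne_zero.mpr (fun h => (Polynomial.content_eq_zero_iff.not.mpr hW0)
      (hinj (by rwa [map_zero]))))
  have hkey : Polynomial.C (algebraMap R K (s : R)) * w
      = Polynomial.C (algebraMap R K W.content) * p.map (algebraMap R K) := by
    have := congrArg (Polynomial.map (algebraMap R K)) W.eq_C_content_mul_primPart
    rw [hs', Polynomial.map_mul, Polynomial.map_C] at this
    exact this
  have hassoc : Associated w (p.map (algebraMap R K)) := by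
    have h1 : Associated w (Polynomial.C (algebraMap R K (s : R)) * w) :=
      (associated_unit_mul_left _ _ hsu).symm
    have h2 : Associated (Polynomial.C (algebraMap R K W.content) * p.map (algebraMap R K))
        (p.map (algebraMap R K)) := associated_unit_mul_left _ _ hcu
    exact (h1.trans (hkey ▸ Associated.refl _)).trans h2
  -- p * p divides g.primPart
  have hdvd1 : (p * p).map (algebraMap R K) ∣ g.map (algebraMap R K) := by
    rw [Polynomial.map_mul]
    exact ((hassoc.mul_mul hassoc).dvd_iff_dvd_left).mp hw
  have hgcu : IsUnit (Polynomial.C (algebraMap R K g.content)) :=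
    Polynomial.isUnit_C.mpr (isUnit_iff_ne_zero.mpr (fun h => (Polynomial.content_eq_zero_iff.not.mpr hg0)
      (hinj (by rwa [map_zero]))))
  have hdvd2 : (p * p).map (algebraMap R K) ∣ (g.primPart).map (algebraMap R K) := by
    have hg' : g.map (algebraMap R K)
        = Polynomial.C (algebraMap R K g.content) * (g.primPart).map (algebraMap R K) := by
      have := congrArg (Polynomial.map (algebraMap R K)) g.eq_C_content_mul_primPart
      rwa [Polynomial.map_mul, Polynomial.map_C] at this
    have := hdvd1
    rw [hg'] at this
    exact (Associated.dvd_iff_dvd_right (associated_unit_mul_left _ _ hgcu)).mp this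
  have hpp : p * p ∣ g :=
    ((hp_prim.mul hp_prim).dvd_of_fraction_map_dvd_fraction_map
      hdvd2).trans g.primPart_dvd
  have hup : IsUnit p := hg p hpp
  exact hassoc.symm.isUnit (hup.map (Polynomial.mapRingHom (algebraMap R K)))

/-- The substitution `x_i ↦ Q_i + t·P_i` as a ring hom into `ℂ[Q][t]`. -/
noncomputable def tauH (m : ℕ) (P : Fin m → ℂ) :
    MvPolynomial (Fin m) ℂ →+* Polynomial (MvPolynomial (Fin m) ℂ) :=
  MvPolynomial.eval₂Hom (Polynomial.C.comp MvPolynomial.C)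
    (fun i => Polynomial.C (MvPolynomial.X i) + Polynomial.C (MvPolynomial.C (P i)) * Polynomial.X)

/-- The shift `Q_i ↦ Q_i + t·P_i`, `t ↦ t` as an endomorphism of `ℂ[Q][t]`. -/
noncomputable def sigH (m : ℕ) (P : Fin m → ℂ) :
    Polynomial (MvPolynomial (Fin m) ℂ) →+* Polynomial (MvPolynomial (Fin m) ℂ) :=
  Polynomial.eval₂RingHom (tauH m P) Polynomial.X

theorem sigH_C (m : ℕ) (P : Fin m → ℂ) (a : MvPolynomial (Fin m) ℂ) :
    sigH m P (Polynomial.C a) = tauH m P a := by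
  simp [sigH, Polynomial.coe_eval₂RingHom, Polynomial.eval₂_C]

theorem sigH_tauH (m : ℕ) (P : Fin m → ℂ) (a : MvPolynomial (Fin m) ℂ) :
    sigH m (-P) (tauH m P a) = Polynomial.C a := by
  have h : (sigH m (-P)).comp (tauH m P)
      = (Polynomial.C : MvPolynomial (Fin m) ℂ →+* Polynomial (MvPolynomial (Fin m) ℂ)) := by
    apply MvPolynomial.ringHom_ext
    · intro c
      simp only [RingHom.comp_apply, tauH, MvPolynomial.eval₂Hom_C, RingHom.comp_apply]
      rw [sigH_C]
      simp [tauH]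
    · intro i
      simp only [RingHom.comp_apply, tauH, MvPolynomial.eval₂Hom_X']
      rw [map_add, map_mul, sigH_C, sigH_C]
      have hX : sigH m (-P) Polynomial.X = Polynomial.X := by
        simp [sigH, Polynomial.coe_eval₂RingHom, Polynomial.eval₂_X]
      rw [hX]
      simp only [tauH, MvPolynomial.eval₂Hom_X', MvPolynomial.eval₂Hom_C, RingHom.comp_apply,
        Pi.neg_apply, map_neg]
      ring
  exact DFunLike.congr_fun h a

theorem sigH_sigH (m : ℕ) (P : Fin m → ℂ) (x : Polynomial (MvPolynomial (Fin m) ℂ)) :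
    sigH m (-P) (sigH m P x) = x := by
  have h : (sigH m (-P)).comp (sigH m P) = RingHom.id _ := by
    apply Polynomial.ringHom_ext
    · intro a
      simp only [RingHom.comp_apply, RingHom.id_apply]
      rw [sigH_C, sigH_tauH]
    · simp only [RingHom.comp_apply, RingHom.id_apply]
      have hX : ∀ Q : Fin m → ℂ, sigH m Q Polynomial.X = Polynomial.X := fun Q => by
        simp [sigH, Polynomial.coe_eval₂RingHom, Polynomial.eval₂_X]
      rw [hX, hX]
  exact DFunLike.congr_fun h x

theorem fFP_eq_map (m : ℕ) (F : MvPolynomial (Fin m) ℂ) (P : Fin m → ℂ) :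
    fFP F P = (tauH m P F).map (algebraMap (MvPolynomial (Fin m) ℂ) (RatFuncField m)) := by
  have h := MvPolynomial.eval₂_comp_left
    (Polynomial.mapRingHom (algebraMap (MvPolynomial (Fin m) ℂ) (RatFuncField m)))
    ((Polynomial.C : MvPolynomial (Fin m) ℂ →+* Polynomial (MvPolynomial (Fin m) ℂ)).comp
      (MvPolynomial.C : ℂ →+* MvPolynomial (Fin m) ℂ))
    (fun i => Polynomial.C (MvPolynomial.X i)
      + Polynomial.C (MvPolynomial.C (P i)) * Polynomial.X) F
  have h1 : (tauH m P F).map (algebraMap (MvPolynomial (Fin m) ℂ) (RatFuncField m))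
      = Polynomial.mapRingHom (algebraMap (MvPolynomial (Fin m) ℂ) (RatFuncField m))
        (tauH m P F) := rfl
  rw [fFP, h1, tauH, MvPolynomial.coe_eval₂Hom, h]
  congr 1
  · ext c
    simp
  · funext i
    simp

/-- If `F` is a squarefree homogeneous polynomial of degree `d` in `n+2` variables and
`P ∈ ℂ^{n+2}` satisfies `F(P) ≠ 0`, then `f_{F,P}(t) = F(Q + t·P)` is squarefree in `K[t]`,
hence separable over `K`. -/
theorem fFP_squarefree_of_squarefree (n d : ℕ) (hn : 1 ≤ n) (hd : 1 ≤ d)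
    (F : MvPolynomial (Fin (n + 2)) ℂ) (hF : Squarefree F) (hhom : F.IsHomogeneous d)
    (P : Fin (n + 2) → ℂ) (hP : MvPolynomial.eval P F ≠ 0) :
    Squarefree (fFP F P) ∧ (fFP F P).Separable := by
  letI : StrongNormalizationMonoid (MvPolynomial (Fin (n + 2)) ℂ) :=
    UniqueFactorizationMonoid.normalizationMonoid
  letI : NormalizedGCDMonoid (MvPolynomial (Fin (n + 2)) ℂ) :=
    UniqueFactorizationMonoid.toNormalizedGCDMonoid (MvPolynomial (Fin (n + 2)) ℂ)
  have hCF : Squarefree (Polynomial.C F : Polynomial (MvPolynomial (Fin (n + 2)) ℂ)) :=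
    my_squarefree_C hF
  have htau : Squarefree (tauH (n + 2) P F) := by
    have := my_squarefree_map (sigH (n + 2) P) (sigH (n + 2) (-P)) (sigH_sigH (n + 2) P)
      (fun x => by
        have := sigH_sigH (n + 2) (-P) x
        rwa [neg_neg] at this) hCF
    rwa [sigH_C] at this
  have hsf : Squarefree (fFP F P) := by
    rw [fFP_eq_map]
    exact my_squarefree_map_fraction (RatFuncField (n + 2)) htau
  haveI : CharZero (RatFuncField (n + 2)) :=
    (RingHom.charZero_iff (IsFractionRing.injective (MvPolynomial (Fin (n + 2)) ℂ)
      (RatFuncField (n + 2)))).mp inferInstance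
  exact ⟨hsf, PerfectField.separable_iff_squarefree.mpr hsf⟩
end
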